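/- Let R be a commutative ring with 0 ≠ 1 and let A be a rook matrix of size l × k over R. Then there exist a permutation matrix S of size k × k and a rook matrix P of size l × k in pseudo-echelon form such that A = P * S, and moreover P has exactly the same zero rows and exactly the same zero columns as A. -/

import Mathlib

/-- A rook matrix: every entry is 0 or 1, and there is at most one entry
equal to 1 in each row and in each column. -/
def IsRookMatrix {l k : ℕ} {R : Type*} [CommRing R]
    (A : Matrix (Fin l) (Fin k) R) : Prop :=
  (∀ i j, A i j = 0 ∨ A i j = 1) ∧
  (∀ i j j', A i j = 1 → A i j' = 1 → j = j') ∧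
  (∀ i i' j, A i j = 1 → A i' j = 1 → i = i')

/-- Pseudo-echelon form: if rows `i < i'` contain nonzero entries in columns
`j` and `j'` respectively, then `j < j'`. -/
def IsPseudoEchelon {l k : ℕ} {R : Type*} [CommRing R]
    (A : Matrix (Fin l) (Fin k) R) : Prop :=
  ∀ i i' j j', i < i' → A i j ≠ 0 → A i' j' ≠ 0 → j < j'

/-- A permutation matrix: the 0–1 matrix of some permutation `σ`, with
entry 1 exactly in the positions `(σ j, j)`. -/
def IsPermMatrix {n : ℕ} {R : Type*} [CommRing R]
    (S : Matrix (Fin n) (Fin n) R) : Prop :=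
  ∃ σ : Equiv.Perm (Fin n), ∀ i j, S i j = if i = σ j then 1 else 0

/-- The matrix `[f]` associated to a partial equivalence (rook diagram)
`f : PEquiv (Fin k) (Fin l)`: the `(q, p)` entry is 1 if `f p = q` and 0
otherwise. -/
def rookMatrixOf {k l : ℕ} (R : Type*) [CommRing R]
    (f : PEquiv (Fin k) (Fin l)) : Matrix (Fin l) (Fin k) R :=
  fun q p => if f p = some q then 1 else 0

/-- A partial equivalence (rook diagram) is monotone (planar) if for all
`p, q` in its domain, `p < q` implies `f p < f q`. -/
def IsMonotonePE {k l : ℕ} (f : PEquiv (Fin k) (Fin l)) : Prop :=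
  ∀ p q i j, i ∈ f p → j ∈ f q → p < q → i < j

theorem rookMatrix_eq_pseudoEchelon_mul_perm {l k : ℕ} {R : Type*} [CommRing R]
    [Nontrivial R] (A : Matrix (Fin l) (Fin k) R) (hA : IsRookMatrix A) :
    ∃ (S : Matrix (Fin k) (Fin k) R) (P : Matrix (Fin l) (Fin k) R),
      IsPermMatrix S ∧ IsRookMatrix P ∧ IsPseudoEchelon P ∧ A = P * S ∧
      (∀ i, (∀ j, P i j = 0) ↔ (∀ j, A i j = 0)) ∧
      (∀ j, (∀ i, P i j = 0) ↔ (∀ i, A i j = 0)) := by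
  classical
  obtain ⟨h01, hrow, hcol⟩ := hA
  set D : Finset (Fin k) := Finset.univ.filter (fun j => ∃ i, A i j = 1) with hDdef
  have hmemD : ∀ j, j ∈ D ↔ ∃ i, A i j = 1 := by
    intro j; simp [hDdef]
  have hr : ∀ j : {x // x ∈ D}, ∃ i, A i (j : Fin k) = 1 := fun j =>
    (hmemD j).1 j.2
  set r : {x // x ∈ D} → Fin l := fun j => (hr j).choose with hrdef
  have hr1 : ∀ j, A (r j) (j : Fin k) = 1 := fun j => (hr j).choose_spec
  have rinj : Function.Injective r := by
    intro j j' h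
    exact Subtype.ext (hrow (r j) j j' (hr1 j) (h ▸ hr1 j'))
  set E : Finset (Fin l) := D.attach.image r with hEdef
  have hcard : E.card = D.card := by
    rw [hEdef, Finset.card_image_of_injective _ rinj, Finset.card_attach]
  let e1 := D.orderIsoOfFin (rfl : D.card = D.card)
  let e2 := E.orderIsoOfFin hcard
  have hrE_bij : Function.Bijective
      (fun j : {x // x ∈ D} => (⟨r j, Finset.mem_image_of_mem r (Finset.mem_attach _ j)⟩ : {x // x ∈ E})) := by
    constructor
    · intro j j' h
      exact rinj (congrArg Subtype.val h)
    · rintro ⟨i, hi⟩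
      obtain ⟨j, _, hj⟩ := Finset.mem_image.1 hi
      exact ⟨j, Subtype.ext hj⟩
  let rE := Equiv.ofBijective _ hrE_bij
  let τ : Equiv.Perm {x // x ∈ D} := (rE.trans e2.toEquiv.symm).trans e1.toEquiv
  have hτmono : ∀ j j' : {x // x ∈ D}, r j < r j' → (τ j : Fin k) < (τ j' : Fin k) := by
    intro j j' h
    show ((e1 (e2.symm (rE j)) : {x // x ∈ D}) : Fin k) < (e1 (e2.symm (rE j')) : {x // x ∈ D})
    refine Subtype.coe_lt_coe.2 (e1.strictMono ?_)
    rw [← OrderIso.lt_iff_lt e2, OrderIso.apply_symm_apply, OrderIso.apply_symm_apply]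
    exact Subtype.mk_lt_mk.2 h
  let σ : Equiv.Perm (Fin k) := Equiv.Perm.ofSubtype (p := (· ∈ D)) τ
  have hσmem : ∀ j (hj : j ∈ D), σ j = (τ ⟨j, hj⟩ : Fin k) := fun j hj =>
    Equiv.Perm.ofSubtype_apply_of_mem τ hj
  have hσnot : ∀ j, j ∉ D → σ j = j := fun j hj =>
    Equiv.Perm.ofSubtype_apply_of_not_mem τ hj
  have hσD : ∀ j, j ∈ D → σ j ∈ D := by
    intro j hj; rw [hσmem j hj]; exact (τ ⟨j, hj⟩).2
  have hσinvD : ∀ m, σ⁻¹ m ∈ D ↔ m ∈ D := by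
    intro m
    constructor
    · intro h
      have := hσD _ h
      rwa [Equiv.Perm.inv_def, Equiv.apply_symm_apply] at this
    · intro h
      by_contra hc
      have := hσnot _ hc
      rw [Equiv.Perm.inv_def, Equiv.apply_symm_apply] at this
      exact hc (this ▸ h)
  refine ⟨fun i j => if i = σ j then 1 else 0, fun i m => A i (σ⁻¹ m), ⟨σ, fun _ _ => rfl⟩,
    ⟨fun i m => h01 i _, fun i m m' h1 h2 => ?_, fun i i' m h1 h2 => hcol i i' _ h1 h2⟩,
    ?_, ?_, fun i => ⟨fun h j => ?_, fun h j => h _⟩, fun m => ?_⟩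
  · have := hrow i _ _ h1 h2
    exact σ⁻¹.injective this
  · -- pseudo echelon
    intro i i' m m' hii h1 h2
    have h1' : A i (σ⁻¹ m) = 1 := (h01 i _).resolve_left h1
    have h2' : A i' (σ⁻¹ m') = 1 := (h01 i' _).resolve_left h2
    have hm : σ⁻¹ m ∈ D := (hmemD _).2 ⟨i, h1'⟩
    have hm' : σ⁻¹ m' ∈ D := (hmemD _).2 ⟨i', h2'⟩
    have hri : r ⟨σ⁻¹ m, hm⟩ = i := hcol _ i _ (hr1 _) h1'
    have hri' : r ⟨σ⁻¹ m', hm'⟩ = i' := hcol _ i' _ (hr1 _) h2'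
    have := hτmono ⟨σ⁻¹ m, hm⟩ ⟨σ⁻¹ m', hm'⟩ (by rw [hri, hri']; exact hii)
    rw [← hσmem _ hm, ← hσmem _ hm', Equiv.Perm.inv_def, Equiv.apply_symm_apply,
      Equiv.apply_symm_apply] at this
    exact this
  · -- A = P * S
    ext i j
    show A i j = ∑ m, A i (σ⁻¹ m) * (if m = σ j then (1 : R) else 0)
    simp only [mul_ite, mul_one, mul_zero]
    rw [Finset.sum_ite_eq' Finset.univ (σ j) (fun m => A i (σ⁻¹ m))]
    simp
  · -- zero rows
    have := h (σ j)
    simp only [Equiv.Perm.inv_def, Equiv.symm_apply_apply] at this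
    exact this
  · -- zero columns
    have key : ∀ (m : Fin k), (∀ i, A i m = 0) ↔ m ∉ D := by
      intro m
      rw [hmemD]
      constructor
      · rintro h ⟨i, hi⟩
        exact one_ne_zero (hi ▸ h i)
      · intro h i
        refine (h01 i m).resolve_right fun h1 => h ⟨i, h1⟩
    rw [key m, show (∀ i, A i (σ⁻¹ m) = 0) ↔ σ⁻¹ m ∉ D from key _, not_iff_not]
    exact hσinvD m
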